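/- Let M, N : [a,b] × ℝⁿ → vec be free persistence modules of finite rank. Then the vertical bottleneck distance between their barcodes satisfies d_B^{1₀}(B(M), B(N)) ≤ (n−1) · d_I^{1₀}(M, N) if n > 1, and d_B^{1₀}(B(M), B(N)) ≤ d_I^{1₀}(M, N) if n = 1. -/

import Mathlib

open CategoryTheory CategoryTheory.Limits
open scoped ENNReal

/-- The poset `[a,b] × ℝⁿ` (product order), viewed as a thin category. -/
def Slab (a b : ℝ) (n : ℕ) : Type := Set.Icc a b × (Fin n → ℝ)

instance (a b : ℝ) (n : ℕ) : Preorder (Slab a b n) :=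
  inferInstanceAs (Preorder (Set.Icc a b × (Fin n → ℝ)))

variable {a b : ℝ} {n : ℕ}

/-- The vertical shift by `ε·1₀`, `1₀ = (0,1,…,1)`: `(s, x) ↦ (s, x + ε·1)`. -/
def vshift (ε : ℝ) (p : Slab a b n) : Slab a b n := (p.1, fun i => p.2 i + ε)

lemma vshift_monotone (ε : ℝ) : Monotone (vshift (a := a) (b := b) (n := n) ε) :=
  fun _ _ h => Prod.le_def.mpr ⟨(Prod.le_def.mp h).1,
    fun i => (add_le_add_iff_right ε).mpr ((Prod.le_def.mp h).2 i)⟩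

/-- The vertical `ε·1₀`-shift functor on `[a,b] × ℝⁿ`. -/
def vshiftFunctor (a b : ℝ) (n : ℕ) (ε : ℝ) : Slab a b n ⥤ Slab a b n :=
  Monotone.functor (vshift_monotone ε)

variable (K : Type) [Field K]

/-- Persistence modules over `[a,b] × ℝⁿ`. -/
abbrev SlabMod (a b : ℝ) (n : ℕ) (K : Type) [Field K] := Slab a b n ⥤ ModuleCat K

/-- Vertical `ε`-interleaving (i.e. `ε·1₀`-interleaving, `1₀ = (0,1,…,1)`) between two
persistence modules over `[a,b] × ℝⁿ`. -/
def VertInterleaved (ε : ℝ) (M N : SlabMod a b n K) : Prop :=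
  ∃ (f : M ⟶ vshiftFunctor a b n ε ⋙ N) (g : N ⟶ vshiftFunctor a b n ε ⋙ M),
    (∀ (p : Slab a b n) (h : p ≤ vshift ε (vshift ε p)),
        f.app p ≫ g.app (vshift ε p) = M.map (homOfLE h)) ∧
    (∀ (p : Slab a b n) (h : p ≤ vshift ε (vshift ε p)),
        g.app p ≫ f.app (vshift ε p) = N.map (homOfLE h))

/-- The vertical interleaving distance `d_I^{1₀}`. -/
noncomputable def vertInterleavingDist (M N : SlabMod a b n K) : ℝ≥0∞ :=
  sInf {e : ℝ≥0∞ | ∃ ε : ℝ, 0 ≤ ε ∧ e = ENNReal.ofReal ε ∧ VertInterleaved K ε M N}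

/-- The free interval (principal upset) generated by `c`, at the level of types:
`p ↦ PLift (c ≤ p)`. -/
def upFunctor (c : Slab a b n) : Slab a b n ⥤ Type where
  obj p := PLift (c ≤ p)
  map h := TypeCat.ofHom fun t => ⟨t.down.trans (leOfHom h)⟩
  map_id _ := rfl
  map_comp _ _ := rfl

/-- The interval module `k^J` on the free interval `J = [c, ∞)` (within `[a,b] × ℝⁿ`,
a free interval `[x₀,b] × [x₁,∞) × ⋯ × [xₙ,∞)` is exactly the principal upset of a point). -/
noncomputable def upMod (c : Slab a b n) : SlabMod a b n K :=
  upFunctor c ⋙ ModuleCat.free K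

/-- The free persistence module with one generator at `gen i` for each `i`. -/
noncomputable def freeMod {ι : Type} (gen : ι → Slab a b n) : SlabMod a b n K :=
  (show Slab a b n ⥤ Type from
    { obj := fun p => Σ i : ι, PLift (gen i ≤ p)
      map := fun h => TypeCat.ofHom fun t => ⟨t.1, ⟨t.2.down.trans (leOfHom h)⟩⟩
      map_id := fun _ => rfl
      map_comp := fun _ _ => rfl }) ⋙ ModuleCat.free K

/-- The zero persistence module. -/
noncomputable def zeroMod : SlabMod a b n K :=
  (CategoryTheory.Functor.const (Slab a b n)).obj (ModuleCat.of K PUnit)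

/-- A vertical `ε·1₀`-bottleneck matching between two multisets of free intervals, given by
families of generators `cB : ι → [a,b]×ℝⁿ` and `cC : κ → [a,b]×ℝⁿ`: a bijection between
subsets matching intervals whose interval modules are vertically `ε`-interleaved, all
unmatched intervals having interval modules vertically `ε`-interleaved with `0`. -/
def BottleneckMatch (ε : ℝ) {ι κ : Type} (cB : ι → Slab a b n) (cC : κ → Slab a b n) : Prop :=
  ∃ (s : Set ι) (t : Set κ) (e : s ≃ t),
    (∀ i : s, VertInterleaved K ε (upMod K (cB i)) (upMod K (cC (e i)))) ∧
    (∀ i : ι, i ∉ s → VertInterleaved K ε (upMod K (cB i)) (zeroMod K)) ∧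
    (∀ j : κ, j ∉ t → VertInterleaved K ε (upMod K (cC j)) (zeroMod K))

/-- The vertical bottleneck distance `d_B^{1₀}` between two barcodes of free intervals. -/
noncomputable def vertBottleneckDist {ι κ : Type} (cB : ι → Slab a b n)
    (cC : κ → Slab a b n) : ℝ≥0∞ :=
  sInf {e : ℝ≥0∞ | ∃ ε : ℝ, 0 ≤ ε ∧ e = ENNReal.ofReal ε ∧ BottleneckMatch K ε cB cC}

section AuxStability

lemma le_vshift_vshift {ε : ℝ} (hε : 0 ≤ ε) (p : Slab a b n) :
    p ≤ vshift ε (vshift ε p) :=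
  Prod.le_def.mpr ⟨le_refl _, fun i => by
    simp only [vshift]
    linarith⟩

/-- Construction of a vertical interleaving between interval modules. -/
lemma upMod_interleaved {δ : ℝ} {c d : Slab a b n}
    (h1 : d ≤ vshift δ c) (h2 : c ≤ vshift δ d) :
    VertInterleaved K δ (upMod K c) (upMod K d) := by
  have hφ : ∀ p : Slab a b n, c ≤ p → d ≤ vshift δ p :=
    fun p hp => h1.trans (vshift_monotone δ hp)
  have hψ : ∀ p : Slab a b n, d ≤ p → c ≤ vshift δ p :=
    fun p hp => h2.trans (vshift_monotone δ hp)
  let φ : upFunctor c ⟶ vshiftFunctor a b n δ ⋙ upFunctor d :=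
    { app := fun p => TypeCat.ofHom fun t => ⟨hφ p t.down⟩
      naturality := fun p q u => TypeCat.homEquiv.injective (funext fun t => Subsingleton.elim (α := PLift (d ≤ _)) _ _) }
  let ψ : upFunctor d ⟶ vshiftFunctor a b n δ ⋙ upFunctor c :=
    { app := fun p => TypeCat.ofHom fun t => ⟨hψ p t.down⟩
      naturality := fun p q u => TypeCat.homEquiv.injective (funext fun t => Subsingleton.elim (α := PLift (c ≤ _)) _ _) }
  refine ⟨Functor.whiskerRight φ (ModuleCat.free K), Functor.whiskerRight ψ (ModuleCat.free K), ?_, ?_⟩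
  · intro p h
    show (ModuleCat.free K).map (φ.app p) ≫ (ModuleCat.free K).map (ψ.app (vshift δ p)) = _
    refine ((ModuleCat.free K).map_comp (φ.app p) (ψ.app (vshift δ p))).symm.trans ?_
    show (ModuleCat.free K).map _ = (ModuleCat.free K).map ((upFunctor c).map (homOfLE h))
    exact congrArg _ (TypeCat.homEquiv.injective (funext fun t => Subsingleton.elim (α := PLift (c ≤ _)) _ _))
  · intro p h
    show (ModuleCat.free K).map (ψ.app p) ≫ (ModuleCat.free K).map (φ.app (vshift δ p)) = _
    refine ((ModuleCat.free K).map_comp (ψ.app p) (φ.app (vshift δ p))).symm.trans ?_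
    show (ModuleCat.free K).map _ = (ModuleCat.free K).map ((upFunctor d).map (homOfLE h))
    exact congrArg _ (TypeCat.homEquiv.injective (funext fun t => Subsingleton.elim (α := PLift (d ≤ _)) _ _))

/-- Interleaving is invariant under isomorphism. -/
lemma VertInterleaved.of_iso {ε : ℝ} {M M' N N' : SlabMod a b n K}
    (h : VertInterleaved K ε M N) (eM : M ≅ M') (eN : N ≅ N') :
    VertInterleaved K ε M' N' := by
  obtain ⟨f, g, hfg, hgf⟩ := h
  refine ⟨eM.inv ≫ f ≫ Functor.whiskerLeft (vshiftFunctor a b n ε) eN.hom,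
          eN.inv ≫ g ≫ Functor.whiskerLeft (vshiftFunctor a b n ε) eM.hom, ?_, ?_⟩
  · intro p hp
    have h1 := hfg p hp
    simp only [NatTrans.comp_app, Functor.whiskerLeft_app]
    erw [Category.assoc, Category.assoc, Iso.hom_inv_id_app_assoc, reassoc_of% h1, eM.hom.naturality, Iso.inv_hom_id_app_assoc]
  · intro p hp
    have h1 := hgf p hp
    simp only [NatTrans.comp_app, Functor.whiskerLeft_app]
    erw [Category.assoc, Category.assoc, Iso.hom_inv_id_app_assoc, reassoc_of% h1, eN.hom.naturality, Iso.inv_hom_id_app_assoc]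

section Matrices

open Classical in
lemma plift_sigma_eq {ι₂ : Type} {P : ι₂ → Prop} {j j' : ι₂} {t : PLift (P j)} {t' : PLift (P j')}
    (h : j = j') : (⟨j, t⟩ : Σ j'', PLift (P j'')) = ⟨j', t'⟩ := by
  subst h; exact congrArg _ (Subsingleton.elim (α := PLift _) _ _)

lemma plift_sigma_map_inj {ι₂ : Type} {P Q : ι₂ → Prop} (h : ∀ j, P j → Q j) :
    Function.Injective (fun t : Σ j, PLift (P j) =>
      (⟨t.1, ⟨h t.1 t.2.down⟩⟩ : Σ j, PLift (Q j))) := by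
  rintro ⟨x1, x2⟩ ⟨y1, y2⟩ hxy
  obtain rfl : x1 = y1 := congrArg Sigma.fst hxy
  exact plift_sigma_eq rfl

variable {ι₁ ι₂ : Type} {ε : ℝ} {c1 : ι₁ → Slab a b n} {c2 : ι₂ → Slab a b n}

/-- Reinterpret an element of a free persistence module as a finitely supported function. -/
def elOf {p : Slab a b n} (x : (Σ i, PLift (c1 i ≤ p)) →₀ K) : ((freeMod K c1).obj p) := by exact x

/-- Reinterpret an element of a shifted free persistence module. -/
def elTo {p : Slab a b n} (x : ((vshiftFunctor a b n ε ⋙ freeMod K c2).obj p)) :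
    (Σ j, PLift (c2 j ≤ vshift ε p)) →₀ K := by exact x

open Classical in
/-- The matrix of a natural transformation between free persistence modules. -/
noncomputable def matEntry
    (f : freeMod K c1 ⟶ vshiftFunctor a b n ε ⋙ freeMod K c2) (j : ι₂) (i : ι₁) : K :=
  if h : c2 j ≤ vshift ε (c1 i) then
    elTo K (f.app (c1 i) (elOf K (Finsupp.single ⟨i, ⟨le_refl (c1 i)⟩⟩ (1 : K))))
      (⟨j, ⟨h⟩⟩ : Σ j', PLift (c2 j' ≤ vshift ε (c1 i)))
  else 0

lemma matEntry_ne_zero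
    {f : freeMod K c1 ⟶ vshiftFunctor a b n ε ⋙ freeMod K c2} {j : ι₂} {i : ι₁}
    (h : matEntry K f j i ≠ 0) : c2 j ≤ vshift ε (c1 i) := by
  by_contra hc
  unfold matEntry at h
  rw [dif_neg hc] at h
  exact h rfl

lemma apply_single
    (f : freeMod K c1 ⟶ vshiftFunctor a b n ε ⋙ freeMod K c2) {i : ι₁} {p : Slab a b n}
    (hi : c1 i ≤ p) {j : ι₂} (hj : c2 j ≤ vshift ε p) :
    elTo K (f.app p (elOf K (Finsupp.single ⟨i, ⟨hi⟩⟩ (1 : K))))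
      (⟨j, ⟨hj⟩⟩ : Σ j', PLift (c2 j' ≤ vshift ε p)) = matEntry K f j i := by
  classical
  set τ : (Σ j', PLift (c2 j' ≤ vshift ε (c1 i))) → (Σ j', PLift (c2 j' ≤ vshift ε p)) :=
    fun t => ⟨t.1, ⟨t.2.down.trans (vshift_monotone ε hi)⟩⟩ with hτ
  set σ : (Σ i', PLift (c1 i' ≤ c1 i)) → (Σ i', PLift (c1 i' ≤ p)) :=
    fun t => ⟨t.1, ⟨t.2.down.trans hi⟩⟩ with hσ
  have h1 : elTo K (f.app p (elOf K (Finsupp.mapDomain σ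
        (Finsupp.single ⟨i, ⟨le_refl (c1 i)⟩⟩ (1 : K))))) =
      Finsupp.mapDomain τ (elTo K (f.app (c1 i)
        (elOf K (Finsupp.single ⟨i, ⟨le_refl (c1 i)⟩⟩ (1 : K))))) :=
    congrArg (fun t : (freeMod K c1).obj (c1 i) ⟶
        (vshiftFunctor a b n ε ⋙ freeMod K c2).obj p =>
        elTo K (t (elOf K (Finsupp.single ⟨i, ⟨le_refl (c1 i)⟩⟩ (1 : K)))))
      (f.naturality (homOfLE hi))
  rw [Finsupp.mapDomain_single] at h1
  have h0 : elTo K (f.app p (elOf K (Finsupp.single ⟨i, ⟨hi⟩⟩ (1 : K)))) =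
      Finsupp.mapDomain τ (elTo K (f.app (c1 i)
        (elOf K (Finsupp.single ⟨i, ⟨le_refl (c1 i)⟩⟩ (1 : K))))) := h1
  rw [h0]
  by_cases h : c2 j ≤ vshift ε (c1 i)
  · have he : (⟨j, ⟨hj⟩⟩ : Σ j', PLift (c2 j' ≤ vshift ε p)) = τ ⟨j, ⟨h⟩⟩ := rfl
    have injτ : Function.Injective τ := by
      rw [hτ]
      exact plift_sigma_map_inj (P := fun j' => c2 j' ≤ vshift ε (c1 i))
        (Q := fun j' => c2 j' ≤ vshift ε p) (fun j' hj' => hj'.trans (vshift_monotone ε hi))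
    rw [he, Finsupp.mapDomain_apply injτ, matEntry, dif_pos h]
  · rw [Finsupp.mapDomain_notin_range, matEntry, dif_neg h]
    rintro ⟨⟨j', t'⟩, he⟩
    obtain rfl : j' = j := congrArg Sigma.fst he
    exact h t'.down

end Matrices

section Comp

variable {ι₁ ι₂ : Type} {ε : ℝ} {c1 : ι₁ → Slab a b n} {c2 : ι₂ → Slab a b n}

open Classical in
lemma apply_single_decomp [Fintype ι₂]
    (f : freeMod K c1 ⟶ vshiftFunctor a b n ε ⋙ freeMod K c2) (i : ι₁) :
    elTo K (f.app (c1 i) (elOf K (Finsupp.single ⟨i, ⟨le_refl (c1 i)⟩⟩ (1 : K)))) =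
      ∑ j : ι₂, (if h : c2 j ≤ vshift ε (c1 i) then
        Finsupp.single (⟨j, ⟨h⟩⟩ : Σ j', PLift (c2 j' ≤ vshift ε (c1 i))) (matEntry K f j i)
        else 0) := by
  classical
  apply Finsupp.ext
  rintro ⟨j0, hj0⟩
  rw [apply_single K f (le_refl (c1 i)) hj0.down, Finsupp.finset_sum_apply]
  rw [Finset.sum_eq_single j0]
  · rw [dif_pos hj0.down]
    have : (⟨j0, ⟨hj0.down⟩⟩ : Σ j', PLift (c2 j' ≤ vshift ε (c1 i))) = ⟨j0, hj0⟩ := rfl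
    rw [this, Finsupp.single_eq_same]
  · intro j _ hne
    by_cases h : c2 j ≤ vshift ε (c1 i)
    · rw [dif_pos h, Finsupp.single_eq_of_ne']
      intro hc
      exact hne (congrArg Sigma.fst hc)
    · rw [dif_neg h]
      rfl
  · intro h
    exact absurd (Finset.mem_univ j0) h

open Classical in
lemma matEntry_comp [Fintype ι₂] (hε : 0 ≤ ε)
    (f : freeMod K c1 ⟶ vshiftFunctor a b n ε ⋙ freeMod K c2)
    (g : freeMod K c2 ⟶ vshiftFunctor a b n ε ⋙ freeMod K c1)
    (hfg : ∀ (p : Slab a b n) (h : p ≤ vshift ε (vshift ε p)),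
        f.app p ≫ g.app (vshift ε p) = (freeMod K c1).map (homOfLE h))
    (i i' : ι₁) :
    ∑ j : ι₂, matEntry K g i' j * matEntry K f j i = if i' = i then 1 else 0 := by
  classical
  have hq : c1 i ≤ vshift ε (vshift ε (c1 i)) := le_vshift_vshift hε (c1 i)
  -- the composite applied to the generator at `c1 i`
  have hcomp : elTo K (g.app (vshift ε (c1 i))
        (f.app (c1 i) (elOf K (Finsupp.single ⟨i, ⟨le_refl (c1 i)⟩⟩ (1 : K))))) =
      Finsupp.single (⟨i, ⟨hq⟩⟩ : Σ i'', PLift (c1 i'' ≤ vshift ε (vshift ε (c1 i)))) (1 : K) := by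
    have h1 := congrArg (fun t : (freeMod K c1).obj (c1 i) ⟶
        (vshiftFunctor a b n ε ⋙ freeMod K c1).obj (vshift ε (c1 i)) =>
        elTo K (t (elOf K (Finsupp.single ⟨i, ⟨le_refl (c1 i)⟩⟩ (1 : K))))) (hfg (c1 i) hq)
    have h2 : elTo K (g.app (vshift ε (c1 i))
          (f.app (c1 i) (elOf K (Finsupp.single ⟨i, ⟨le_refl (c1 i)⟩⟩ (1 : K))))) =
        Finsupp.mapDomain
          (fun t : Σ i'', PLift (c1 i'' ≤ c1 i) =>
            (⟨t.1, ⟨t.2.down.trans hq⟩⟩ : Σ i'', PLift (c1 i'' ≤ vshift ε (vshift ε (c1 i)))))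
          (Finsupp.single ⟨i, ⟨le_refl (c1 i)⟩⟩ (1:K)) := h1
    rw [Finsupp.mapDomain_single] at h2
    exact h2
  -- decompose the image of the generator under `f`
  have hgy := congrArg (fun z : (Σ j, PLift (c2 j ≤ vshift ε (c1 i))) →₀ K =>
      elTo K (g.app (vshift ε (c1 i)) (elOf K z))) (apply_single_decomp K f i)
  have key : elTo K (g.app (vshift ε (c1 i)) (elOf (a := a) (b := b) (n := n) K
        (∑ j : ι₂, (if h : c2 j ≤ vshift ε (c1 i) then
          Finsupp.single (⟨j, ⟨h⟩⟩ : Σ j', PLift (c2 j' ≤ vshift ε (c1 i))) (matEntry K f j i)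
          else 0)))) =
      Finsupp.single (⟨i, ⟨hq⟩⟩ : Σ i'', PLift (c1 i'' ≤ vshift ε (vshift ε (c1 i)))) (1 : K) :=
    hgy.symm.trans hcomp
  have hsum : ∀ s0 : Σ i'', PLift (c1 i'' ≤ vshift ε (vshift ε (c1 i))),
      elTo K (g.app (vshift ε (c1 i)) (elOf (a := a) (b := b) (n := n) K
        (∑ j : ι₂, (if h : c2 j ≤ vshift ε (c1 i) then
          Finsupp.single (⟨j, ⟨h⟩⟩ : Σ j', PLift (c2 j' ≤ vshift ε (c1 i))) (matEntry K f j i)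
          else 0)))) s0 =
      ∑ j : ι₂, (if h : c2 j ≤ vshift ε (c1 i) then
          matEntry K f j i * (elTo K (g.app (vshift ε (c1 i)) (elOf K
            (Finsupp.single (⟨j, ⟨h⟩⟩ : Σ j', PLift (c2 j' ≤ vshift ε (c1 i))) (1 : K)))) s0)
          else 0) := by
    intro s0
    have hmap : elTo K (g.app (vshift ε (c1 i)) (elOf (a := a) (b := b) (n := n) K
        (∑ j : ι₂, (if h : c2 j ≤ vshift ε (c1 i) then
          Finsupp.single (⟨j, ⟨h⟩⟩ : Σ j', PLift (c2 j' ≤ vshift ε (c1 i))) (matEntry K f j i)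
          else 0)))) =
        ∑ j : ι₂, elTo K (g.app (vshift ε (c1 i)) (elOf K
          (if h : c2 j ≤ vshift ε (c1 i) then
          Finsupp.single (⟨j, ⟨h⟩⟩ : Σ j', PLift (c2 j' ≤ vshift ε (c1 i))) (matEntry K f j i)
          else 0))) :=
      map_sum (g.app (vshift ε (c1 i))).hom _ Finset.univ
    rw [hmap, Finsupp.finset_sum_apply]
    apply Finset.sum_congr rfl
    intro j _
    by_cases h : c2 j ≤ vshift ε (c1 i)
    · rw [dif_pos h, dif_pos h]
      have hs : (Finsupp.single (⟨j, ⟨h⟩⟩ : Σ j', PLift (c2 j' ≤ vshift ε (c1 i)))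
          (matEntry K f j i)) = matEntry K f j i •
          (Finsupp.single (⟨j, ⟨h⟩⟩ : Σ j', PLift (c2 j' ≤ vshift ε (c1 i))) (1 : K)) := by
        rw [Finsupp.smul_single, smul_eq_mul, mul_one]
      rw [hs]
      have hlin : elTo K (g.app (vshift ε (c1 i)) (elOf (a := a) (b := b) (n := n) K
          (matEntry K f j i •
            (Finsupp.single (⟨j, ⟨h⟩⟩ : Σ j', PLift (c2 j' ≤ vshift ε (c1 i))) (1 : K))))) =
          matEntry K f j i • elTo K (g.app (vshift ε (c1 i)) (elOf K
            (Finsupp.single (⟨j, ⟨h⟩⟩ : Σ j', PLift (c2 j' ≤ vshift ε (c1 i))) (1 : K)))) :=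
        map_smul (g.app (vshift ε (c1 i))).hom _ _
      rw [hlin, Finsupp.smul_apply, smul_eq_mul]
    · rw [dif_neg h, dif_neg h]
      have : elTo K (g.app (vshift ε (c1 i)) (elOf (a := a) (b := b) (n := n) (c1 := c2) K
          (0 : (Σ j', PLift (c2 j' ≤ vshift ε (c1 i))) →₀ K))) = 0 :=
        map_zero (g.app (vshift ε (c1 i))).hom
      rw [this]
      rfl
  by_cases hi' : c1 i' ≤ vshift ε (vshift ε (c1 i))
  · have hcoef := congrArg (fun z : (Σ i'', PLift (c1 i'' ≤ vshift ε (vshift ε (c1 i)))) →₀ K =>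
      z ⟨i', ⟨hi'⟩⟩) key
    simp only at hcoef
    rw [hsum ⟨i', ⟨hi'⟩⟩] at hcoef
    have hterm : ∀ j : ι₂, (if h : c2 j ≤ vshift ε (c1 i) then
        matEntry K f j i * (elTo K (g.app (vshift ε (c1 i)) (elOf K
          (Finsupp.single (⟨j, ⟨h⟩⟩ : Σ j', PLift (c2 j' ≤ vshift ε (c1 i))) (1 : K))))
          ⟨i', ⟨hi'⟩⟩)
        else 0) = matEntry K g i' j * matEntry K f j i := by
      intro j
      by_cases h : c2 j ≤ vshift ε (c1 i)
      · rw [dif_pos h, apply_single K g h hi', mul_comm]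
      · rw [dif_neg h]
        have : matEntry K f j i = 0 := by
          by_contra hc
          exact h (matEntry_ne_zero K hc)
        rw [this, mul_zero]
    rw [Finset.sum_congr rfl (fun j _ => hterm j)] at hcoef
    rw [hcoef]
    rw [Finsupp.single_apply]
    by_cases he : i' = i
    · subst he
      simp
    · rw [if_neg he, if_neg]
      intro hc
      exact he (congrArg Sigma.fst hc).symm
  · have hne : i' ≠ i := by
      intro he
      subst he
      exact hi' hq
    rw [if_neg hne]
    apply Finset.sum_eq_zero
    intro j _
    by_cases hgz : matEntry K g i' j = 0
    · rw [hgz, zero_mul]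
    by_cases hfz : matEntry K f j i = 0
    · rw [hfz, mul_zero]
    exact absurd ((matEntry_ne_zero K hgz).trans
      (vshift_monotone ε (matEntry_ne_zero K hfz))) hi'

end Comp

section LinAlg

variable {K : Type} [Field K]

lemma card_eq_of_inverse {ι₁ ι₂ : Type} [Fintype ι₁] [Fintype ι₂]
    [DecidableEq ι₁] [DecidableEq ι₂]
    (F : Matrix ι₂ ι₁ K) (G : Matrix ι₁ ι₂ K) (h1 : G * F = 1) (h2 : F * G = 1) :
    Fintype.card ι₁ = Fintype.card ι₂ := by
  have e : (ι₁ → K) ≃ₗ[K] (ι₂ → K) :=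
    LinearEquiv.ofLinear F.mulVecLin G.mulVecLin
      (by rw [← Matrix.mulVecLin_mul, h2, Matrix.mulVecLin_one])
      (by rw [← Matrix.mulVecLin_mul, h1, Matrix.mulVecLin_one])
  rw [← Module.finrank_fintype_fun_eq_card K, ← Module.finrank_fintype_fun_eq_card K]
  exact e.finrank_eq

lemma card_le_of_factor {A B : Type} [Fintype A] [Fintype B] [DecidableEq A]
    (P : Matrix A A K) (hP : IsUnit P.det) (Q : Matrix A B K) (R : Matrix B A K)
    (hPQR : P = Q * R) : Fintype.card A ≤ Fintype.card B := by
  have hinj : Function.Injective R.mulVecLin := by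
    intro x y hxy
    have hPx : ∀ z, P.mulVec z = Q.mulVec (R.mulVec z) := by
      intro z
      rw [hPQR, ← Matrix.mulVec_mulVec]
    have h1 : P⁻¹.mulVec (P.mulVec x) = P⁻¹.mulVec (P.mulVec y) := by
      rw [hPx, hPx]
      exact congrArg _ (congrArg _ hxy)
    rwa [Matrix.mulVec_mulVec, Matrix.mulVec_mulVec, Matrix.nonsing_inv_mul _ hP,
      Matrix.one_mulVec, Matrix.one_mulVec] at h1
  have := LinearMap.finrank_le_finrank_of_injective hinj
  rwa [Module.finrank_fintype_fun_eq_card K, Module.finrank_fintype_fun_eq_card K] at this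

lemma det_one_sub_strict {A : Type} [Fintype A] [DecidableEq A] {L : Type} [LinearOrder L]
    (S : Matrix A A K) (r : A → L) (hS : ∀ i j, S i j ≠ 0 → r i < r j) :
    (1 - S).det = 1 := by
  classical
  have hBT : (1 - S).BlockTriangular r := by
    intro i j hij
    have h1 : (1 : Matrix A A K) i j = 0 := by
      rw [Matrix.one_apply_ne]
      intro hc
      subst hc
      exact lt_irrefl _ hij
    have h2 : S i j = 0 := by
      by_contra hc
      exact absurd (hS i j hc) (asymm hij)
    simp [Matrix.sub_apply, h1, h2]
  rw [hBT.det]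
  apply Finset.prod_eq_one
  intro x _
  have hblock : (1 - S).toSquareBlock r x = 1 := by
    ext i j
    have h2 : S i.1 j.1 = 0 := by
      by_contra hc
      have := hS i.1 j.1 hc
      rw [i.2, j.2] at this
      exact lt_irrefl _ this
    by_cases hij : i = j
    · subst hij
      simp [Matrix.toSquareBlock_def, h2, Matrix.one_apply]
    · have hne : i.1 ≠ j.1 := fun hc => hij (Subtype.ext hc)
      simp [Matrix.toSquareBlock_def, h2, Matrix.one_apply, hne, hij]
  rw [hblock, Matrix.det_one]

open Classical in
lemma hall_condition {ι₁ ι₂ : Type} [Fintype ι₁] [Fintype ι₂] {L : Type} [LinearOrder L]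
    (F : ι₂ → ι₁ → K) (G : ι₁ → ι₂ → K)
    (hGF : ∀ i i', ∑ j, G i' j * F j i = if i' = i then 1 else 0)
    (r1 : ι₁ → L) (r2 : ι₂ → L) (R' : ι₁ → ι₂ → Prop) [∀ i j, Decidable (R' i j)]
    (hRF : ∀ i j, ¬ R' i j → F j i ≠ 0 → r2 j < r1 i)
    (hRG : ∀ i j, ¬ R' i j → G i j ≠ 0 → r1 i < r2 j)
    (A : Finset ι₁) :
    A.card ≤ (A.biUnion (fun i => Finset.univ.filter (fun j => R' i j))).card := by
  set B := A.biUnion (fun i => Finset.univ.filter (fun j => R' i j)) with hB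
  classical
  have hnotB : ∀ j, j ∉ B → ∀ i ∈ A, ¬ R' i j := by
    intro j hj i hi hR
    exact hj (Finset.mem_biUnion.mpr ⟨i, hi, Finset.mem_filter.mpr ⟨Finset.mem_univ j, hR⟩⟩)
  set SA : Matrix A A K := fun i' i => ∑ j ∈ Bᶜ, G i'.1 j * F j i.1 with hSA
  set QA : Matrix A B K := fun i j => G i.1 j.1 with hQA
  set RA : Matrix B A K := fun j i => F j.1 i.1 with hRA
  have hfact : (1 : Matrix A A K) - SA = QA * RA := by
    ext i' i
    have hsplit : ∑ j ∈ B, G i'.1 j * F j i.1 + ∑ j ∈ Bᶜ, G i'.1 j * F j i.1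
        = ∑ j : ι₂, G i'.1 j * F j i.1 := Finset.sum_add_sum_compl B _
    have hQR : (QA * RA) i' i = ∑ j ∈ B, G i'.1 j * F j i.1 := by
      rw [Matrix.mul_apply]
      exact Finset.sum_coe_sort B (fun j => G i'.1 j * F j i.1)
    rw [Matrix.sub_apply, hQR]
    have hone : (1 : Matrix A A K) i' i = if i'.1 = i.1 then 1 else 0 := by
      by_cases h : i' = i
      · subst h; simp
      · rw [Matrix.one_apply_ne h, if_neg (fun hc => h (Subtype.ext hc))]
    rw [hone, ← hGF i.1 i'.1, ← hsplit]
    ring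
  have hdet : (1 - SA).det = 1 := by
    apply det_one_sub_strict SA (fun i => r1 i.1)
    intro i' i hne
    obtain ⟨j, hjmem, hjne⟩ := Finset.exists_ne_zero_of_sum_ne_zero hne
    have hjB : j ∉ B := Finset.mem_compl.mp hjmem
    have hGne : G i'.1 j ≠ 0 := fun hc => hjne (by rw [hc, zero_mul])
    have hFne : F j i.1 ≠ 0 := fun hc => hjne (by rw [hc, mul_zero])
    exact lt_trans (hRG i'.1 j (hnotB j hjB i'.1 i'.2) hGne)
      (hRF i.1 j (hnotB j hjB i.1 i.2) hFne)
  have hcard : Fintype.card A ≤ Fintype.card B :=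
    card_le_of_factor (1 - SA) (by rw [hdet]; exact isUnit_one) QA RA hfact
  rwa [Fintype.card_coe, Fintype.card_coe] at hcard

end LinAlg

section Geometry

/-- Lexicographic rank of a point of the slab: first coordinate, then sum of the
vertical coordinates. -/
noncomputable def slabRank (p : Slab a b n) : ℝ ×ₗ ℝ := toLex ((p.1 : ℝ), ∑ k, p.2 k)

lemma key_geom {ε δ : ℝ} (hε : 0 ≤ ε) (hδ1 : ε ≤ δ) (hδ2 : ((n - 1 : ℕ) : ℝ) * ε ≤ δ)
    {c d : Slab a b n} (hF : d ≤ vshift ε c) (hlex : slabRank c ≤ slabRank d) :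
    d ≤ vshift δ c ∧ c ≤ vshift δ d := by
  obtain ⟨hF1, hF2⟩ := Prod.le_def.mp hF
  have hd1 : (d.1 : ℝ) ≤ (c.1 : ℝ) := Subtype.coe_le_coe.mpr hF1
  rcases Prod.Lex.le_iff.mp hlex with hlt | ⟨heq, hsum⟩
  · exact absurd hlt (not_lt.mpr hd1)
  constructor
  · refine Prod.le_def.mpr ⟨hF1, fun k => ?_⟩
    have := hF2 k
    simp only [vshift] at this ⊢
    linarith
  · refine Prod.le_def.mpr ⟨Subtype.coe_le_coe.mp (le_of_eq heq), fun k => ?_⟩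
    have hterm : ∀ m, -ε ≤ c.2 m - d.2 m := by
      intro m
      have := hF2 m
      simp only [vshift] at this
      linarith
    have herase : ∑ m ∈ Finset.univ.erase k, (-ε) ≤
        ∑ m ∈ Finset.univ.erase k, (c.2 m - d.2 m) :=
      Finset.sum_le_sum (fun m _ => hterm m)
    have hcarde : (Finset.univ.erase k).card = n - 1 := by
      rw [Finset.card_erase_of_mem (Finset.mem_univ k), Finset.card_univ, Fintype.card_fin]
    have hconst : ∑ m ∈ Finset.univ.erase k, (-ε) = ((n - 1 : ℕ) : ℝ) * (-ε) := by
      rw [Finset.sum_const, hcarde, nsmul_eq_mul]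
    have hsplit : ∑ m ∈ Finset.univ.erase k, (c.2 m - d.2 m) + (c.2 k - d.2 k) =
        ∑ m, (c.2 m - d.2 m) := Finset.sum_erase_add _ _ (Finset.mem_univ k)
    have htotal : ∑ m, (c.2 m - d.2 m) ≤ 0 := by
      rw [Finset.sum_sub_distrib]
      simp only [slabRank, ofLex_toLex] at hsum
      linarith
    simp only [vshift]
    have : ((n - 1 : ℕ) : ℝ) * (-ε) = -(((n - 1 : ℕ) : ℝ) * ε) := by ring
    rw [this] at hconst
    linarith

end Geometry

section MainLemma

open Classical in
lemma bottleneck_of_interleaved {ι κ : Type} [Fintype ι] [Fintype κ]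
    (cM : ι → Slab a b n) (cN : κ → Slab a b n) {ε : ℝ} (hε : 0 ≤ ε)
    (h : VertInterleaved K ε (freeMod K cM) (freeMod K cN)) :
    BottleneckMatch K (max ε (((n - 1 : ℕ) : ℝ) * ε)) cM cN := by
  classical
  obtain ⟨f, g, hfg, hgf⟩ := h
  set δ := max ε (((n - 1 : ℕ) : ℝ) * ε) with hδ
  have hδ1 : ε ≤ δ := le_max_left _ _
  have hδ2 : ((n - 1 : ℕ) : ℝ) * ε ≤ δ := le_max_right _ _
  set F := matEntry K f with hF
  set G := matEntry K g with hG
  have hGF := matEntry_comp K hε f g hfg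
  have hFG := matEntry_comp K hε g f hgf
  have hcard : Fintype.card ι = Fintype.card κ := by
    have h1 : (Matrix.of G) * (Matrix.of F) = 1 := by
      ext i' i
      rw [Matrix.mul_apply]
      rw [show ∑ j, Matrix.of G i' j * Matrix.of F j i = ∑ j, G i' j * F j i from rfl, hGF]
      by_cases h : i' = i
      · subst h; simp
      · rw [if_neg h, Matrix.one_apply_ne h]
    have h2 : (Matrix.of F) * (Matrix.of G) = 1 := by
      ext j' j
      rw [Matrix.mul_apply]
      rw [show ∑ i, Matrix.of F j' i * Matrix.of G i j = ∑ i, F j' i * G i j from rfl, hFG]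
      by_cases h : j' = j
      · subst h; simp
      · rw [if_neg h, Matrix.one_apply_ne h]
    exact card_eq_of_inverse (Matrix.of F) (Matrix.of G) h1 h2
  set R' : ι → κ → Prop := fun i j =>
    (F j i ≠ 0 ∧ slabRank (cM i) ≤ slabRank (cN j)) ∨
    (G i j ≠ 0 ∧ slabRank (cN j) ≤ slabRank (cM i)) with hR'
  have hhall : ∀ A : Finset ι,
      A.card ≤ (A.biUnion (fun i => Finset.univ.filter (fun j => R' i j))).card := by
    intro A
    apply hall_condition F G hGF (fun i => slabRank (cM i)) (fun j => slabRank (cN j)) R'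
    · intro i j hnR hFne
      by_contra hc
      exact hnR (Or.inl ⟨hFne, not_lt.mp hc⟩)
    · intro i j hnR hGne
      by_contra hc
      exact hnR (Or.inr ⟨hGne, not_lt.mp hc⟩)
  obtain ⟨m, hminj, hmmem⟩ :=
    (Finset.all_card_le_biUnion_card_iff_exists_injective
      (fun i => Finset.univ.filter (fun j => R' i j))).mp hhall
  have hmR : ∀ i, R' i (m i) := fun i => (Finset.mem_filter.mp (hmmem i)).2
  have hmbij : Function.Bijective m :=
    (Fintype.bijective_iff_injective_and_card m).mpr ⟨hminj, hcard⟩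
  have hpair : ∀ i, VertInterleaved K δ (upMod K (cM i)) (upMod K (cN (m i))) := by
    intro i
    rcases hmR i with ⟨hFne, hlex⟩ | ⟨hGne, hlex⟩
    · obtain ⟨h1, h2⟩ := key_geom hε hδ1 hδ2 (matEntry_ne_zero K hFne) hlex
      exact upMod_interleaved K h1 h2
    · obtain ⟨h1, h2⟩ := key_geom hε hδ1 hδ2 (matEntry_ne_zero K hGne) hlex
      exact upMod_interleaved K h2 h1
  refine ⟨Set.univ, Set.univ,
    (Equiv.Set.univ ι).trans ((Equiv.ofBijective m hmbij).trans (Equiv.Set.univ κ).symm),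
    ?_, ?_, ?_⟩
  · intro i
    exact hpair i.1
  · intro i hi
    exact absurd (Set.mem_univ i) hi
  · intro j hj
    exact absurd (Set.mem_univ j) hj

end MainLemma

end AuxStability

/-- Stability of free persistence modules under vertical interleaving: if
`M, N : [a,b] × ℝⁿ → vec` are free persistence modules of finite rank (with barcodes given
by the finite generator families `cM` and `cN`), then the vertical bottleneck distance
between their barcodes satisfies `d_B^{1₀}(B(M), B(N)) ≤ (n−1)·d_I^{1₀}(M,N)` if `n > 1`,
and `d_B^{1₀}(B(M), B(N)) ≤ d_I^{1₀}(M,N)` if `n = 1`. -/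
theorem free_module_vertical_stability (a b : ℝ) (n : ℕ) (K : Type) [Field K]
    (ι κ : Type) [Fintype ι] [Fintype κ]
    (cM : ι → Slab a b n) (cN : κ → Slab a b n)
    (M N : SlabMod a b n K)
    (hM : Nonempty (M ≅ freeMod K cM)) (hN : Nonempty (N ≅ freeMod K cN)) :
    (1 < n → vertBottleneckDist K cM cN ≤ (n - 1 : ℕ) * vertInterleavingDist K M N) ∧
    (n = 1 → vertBottleneckDist K cM cN ≤ vertInterleavingDist K M N) := by
  obtain ⟨eM⟩ := hM
  obtain ⟨eN⟩ := hN
  have step : ∀ ε : ℝ, 0 ≤ ε → VertInterleaved K ε M N →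
      vertBottleneckDist K cM cN ≤
        ENNReal.ofReal (max ε (((n - 1 : ℕ) : ℝ) * ε)) := by
    intro ε hε hint
    have hfree := hint.of_iso K eM eN
    have hmatch := bottleneck_of_interleaved K cM cN hε hfree
    exact sInf_le ⟨max ε (((n - 1 : ℕ) : ℝ) * ε), le_trans hε (le_max_left _ _), rfl, hmatch⟩
  constructor
  · intro hn
    have hc0 : ((n - 1 : ℕ) : ℝ≥0∞) ≠ 0 := by
      simp only [ne_eq, Nat.cast_eq_zero]
      omega
    have hct : ((n - 1 : ℕ) : ℝ≥0∞) ≠ ⊤ := ENNReal.natCast_ne_top _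
    have hstep2 : ∀ e ∈ {e : ℝ≥0∞ | ∃ ε : ℝ, 0 ≤ ε ∧ e = ENNReal.ofReal ε ∧
        VertInterleaved K ε M N},
        vertBottleneckDist K cM cN ≤ ((n - 1 : ℕ) : ℝ≥0∞) * e := by
      rintro e ⟨ε, hε, rfl, hint⟩
      have hle := step ε hε hint
      have h1n : (1 : ℝ) ≤ ((n - 1 : ℕ) : ℝ) := by
        have : (1 : ℕ) ≤ n - 1 := by omega
        exact_mod_cast this
      have hmax : max ε (((n - 1 : ℕ) : ℝ) * ε) = ((n - 1 : ℕ) : ℝ) * ε :=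
        max_eq_right (by nlinarith)
      rw [hmax] at hle
      rwa [ENNReal.ofReal_mul (by positivity), ENNReal.ofReal_natCast] at hle
    rcases Set.eq_empty_or_nonempty {e : ℝ≥0∞ | ∃ ε : ℝ, 0 ≤ ε ∧ e = ENNReal.ofReal ε ∧
        VertInterleaved K ε M N} with hS | hS
    · rw [vertInterleavingDist, hS, sInf_empty, ENNReal.mul_top hc0]
      exact le_top
    · have hdiv : vertBottleneckDist K cM cN / ((n - 1 : ℕ) : ℝ≥0∞) ≤
          vertInterleavingDist K M N := by
        apply le_sInf
        intro e he
        rw [ENNReal.div_le_iff_le_mul (Or.inl hc0) (Or.inl hct)]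
        rw [mul_comm]
        exact hstep2 e he
      calc vertBottleneckDist K cM cN
          = ((n - 1 : ℕ) : ℝ≥0∞) * (vertBottleneckDist K cM cN / ((n - 1 : ℕ) : ℝ≥0∞)) :=
            (ENNReal.mul_div_cancel' (fun h => absurd h hc0) (fun h => absurd h hct)).symm
        _ ≤ ((n - 1 : ℕ) : ℝ≥0∞) * vertInterleavingDist K M N :=
            mul_le_mul_right hdiv _
  · intro hn
    apply le_sInf
    rintro e ⟨ε, hε, rfl, hint⟩
    have hle := step ε hε hint
    have hmax : max ε (((n - 1 : ℕ) : ℝ) * ε) = ε := by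
      subst hn
      simp [hε]
    rwa [hmax] at hle
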